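/- In the Gaussian location model, any estimator θ̂_n with P_{n,0}(θ̂_n = 0) → 1 has maximal scaled absolute bias diverging to infinity: sup_{θ∈ℝ} E_{n,θ}[√n|θ̂_n − θ|] → ∞ as n → ∞. -/

import Mathlib

open MeasureTheory ProbabilityTheory Filter Topology

open Real
open scoped ENNReal NNReal

/-- Joint law of a sample of size `n` of i.i.d. `N(θ,1)` observations. -/
noncomputable def gaussP (n : ℕ) (θ : ℝ) : Measure (Fin n → ℝ) :=
  Measure.pi fun _ => gaussianReal θ 1

noncomputable def gdens (θ x : ℝ) : ℝ≥0∞ := ENNReal.ofReal (Real.exp (θ * x - θ ^ 2 / 2))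

lemma measurable_gdens (θ : ℝ) : Measurable (gdens θ) :=
  (((measurable_const.mul measurable_id).sub measurable_const).exp).ennreal_ofReal

lemma gaussianPDF_eq (θ : ℝ) (x : ℝ) :
    gaussianPDF θ 1 x = gaussianPDF 0 1 x * gdens θ x := by
  unfold gaussianPDF gaussianPDFReal gdens
  rw [← ENNReal.ofReal_mul (by positivity)]
  congr 1
  have h : -(x - θ) ^ 2 / (2 * ((1:ℝ≥0):ℝ)) = -(x - 0) ^ 2 / (2 * ((1:ℝ≥0):ℝ))
      + (θ * x - θ ^ 2 / 2) := by push_cast; ring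
  rw [h, Real.exp_add, ← mul_assoc]

lemma gaussianReal_eq_withDensity (θ : ℝ) :
    gaussianReal θ 1 = (gaussianReal 0 1).withDensity (gdens θ) := by
  rw [gaussianReal_of_var_ne_zero θ one_ne_zero, gaussianReal_of_var_ne_zero 0 one_ne_zero,
    ← withDensity_mul _ (measurable_gaussianPDF 0 1) (measurable_gdens θ)]
  congr 1
  ext x
  exact gaussianPDF_eq θ x

lemma lintegral_gdens (θ : ℝ) : ∫⁻ x, gdens θ x ∂(gaussianReal 0 1) = 1 := by
  have h2 : (gaussianReal 0 1).withDensity (gdens θ) Set.univ = 1 := by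
    rw [← gaussianReal_eq_withDensity]
    simp
  rwa [withDensity_apply _ MeasurableSet.univ, setLIntegral_univ] at h2

lemma lintegral_pi_prod : ∀ {n : ℕ} (μ : Fin n → Measure ℝ), (∀ i, SigmaFinite (μ i)) →
    ∀ (g : Fin n → ℝ → ℝ≥0∞), (∀ i, Measurable (g i)) →
    ∫⁻ y, ∏ i, g i (y i) ∂(Measure.pi μ) = ∏ i, ∫⁻ x, g i x ∂(μ i) := by
  intro n
  induction n with
  | zero =>
    intro μ _ g _
    simp [Measure.pi_of_empty]
  | succ n ih =>
    intro μ hμ g hg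
    haveI := hμ
    have hmp := MeasureTheory.measurePreserving_piFinSuccAbove μ 0
    have hmeasf : Measurable (fun z : ℝ × (Fin n → ℝ) => g 0 z.1 * ∏ j, g j.succ (z.2 j)) := by
      refine ((hg 0).comp measurable_fst).mul ?_
      exact Finset.measurable_prod _ fun j _ => (hg j.succ).comp ((measurable_pi_apply j).comp measurable_snd)
    have key := hmp.lintegral_comp hmeasf
    have hla : ∀ y : Fin (n+1) → ℝ,
        (fun z : ℝ × (Fin n → ℝ) => g 0 z.1 * ∏ j, g j.succ (z.2 j))
          ((MeasurableEquiv.piFinSuccAbove (fun _ => ℝ) 0) y) = ∏ i, g i (y i) := by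
      intro y
      rw [Fin.prod_univ_succ]
      simp [MeasurableEquiv.piFinSuccAbove, Fin.zero_succAbove, Fin.tail]
    calc ∫⁻ y, ∏ i, g i (y i) ∂(Measure.pi μ)
        = ∫⁻ y, (fun z : ℝ × (Fin n → ℝ) => g 0 z.1 * ∏ j, g j.succ (z.2 j))
            ((MeasurableEquiv.piFinSuccAbove (fun _ => ℝ) 0) y) ∂(Measure.pi μ) :=
          lintegral_congr fun y => (hla y).symm
      _ = ∫⁻ z : ℝ × (Fin n → ℝ), g 0 z.1 * ∏ j, g j.succ (z.2 j)
            ∂((μ 0).prod (Measure.pi fun j => μ ((0 : Fin (n+1)).succAbove j))) := key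
      _ = (∫⁻ x, g 0 x ∂(μ 0)) * ∫⁻ y : Fin n → ℝ, ∏ j, g j.succ (y j)
            ∂(Measure.pi fun j => μ ((0 : Fin (n+1)).succAbove j)) :=
          lintegral_prod_mul (f := g 0) (g := fun y : Fin n → ℝ => ∏ j, g j.succ (y j)) (hg 0).aemeasurable
            (Finset.measurable_prod _ fun j _ =>
              (hg j.succ).comp (measurable_pi_apply j)).aemeasurable
      _ = ∏ i, ∫⁻ x, g i x ∂(μ i) := by
          rw [Fin.prod_univ_succ]
          congr 1
          have := ih (fun j => μ ((0 : Fin (n+1)).succAbove j)) (fun j => hμ _)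
            (fun j => g j.succ) (fun j => hg _)
          simpa [Fin.zero_succAbove] using this

lemma pi_withDensity {n : ℕ} (μ : Fin n → Measure ℝ) [hμ : ∀ i, SigmaFinite (μ i)]
    (g : Fin n → ℝ → ℝ≥0∞) (hg : ∀ i, Measurable (g i))
    [hwd : ∀ i, SigmaFinite ((μ i).withDensity (g i))] :
    Measure.pi (fun i => (μ i).withDensity (g i)) =
      (Measure.pi μ).withDensity (fun y => ∏ i, g i (y i)) := by
  refine Measure.pi_eq (μ := fun i => (μ i).withDensity (g i)) fun s hs => ?_
  rw [withDensity_apply _ (MeasurableSet.univ_pi hs)]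
  calc ∫⁻ y in Set.pi Set.univ s, ∏ i, g i (y i) ∂Measure.pi μ
      = ∫⁻ y, ∏ i, Set.indicator (s i) (g i) (y i) ∂Measure.pi μ := by
        rw [← lintegral_indicator (MeasurableSet.univ_pi hs)]
        refine lintegral_congr fun y => ?_
        by_cases hy : y ∈ Set.pi Set.univ s
        · rw [Set.indicator_of_mem hy]
          exact Finset.prod_congr rfl fun i _ =>
            (Set.indicator_of_mem (hy i (Set.mem_univ i)) _).symm
        · rw [Set.indicator_of_notMem hy]
          rw [Set.mem_univ_pi] at hy
          push_neg at hy
          obtain ⟨i, hi⟩ := hy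
          exact (Finset.prod_eq_zero (Finset.mem_univ i)
            (Set.indicator_of_notMem hi _)).symm
    _ = ∏ i, ∫⁻ x, Set.indicator (s i) (g i) x ∂μ i :=
        lintegral_pi_prod μ hμ _ (fun i => (hg i).indicator (hs i))
    _ = ∏ i, (μ i).withDensity (g i) (s i) := by
        refine Finset.prod_congr rfl fun i _ => ?_
        rw [withDensity_apply _ (hs i), lintegral_indicator (hs i)]

lemma gaussP_eq (n : ℕ) (θ : ℝ) :
    gaussP n θ = (gaussP n 0).withDensity (fun y => ∏ i, gdens θ (y i)) := by
  haveI : ∀ _i : Fin n, SigmaFinite ((gaussianReal 0 1).withDensity (gdens θ)) := by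
    intro _
    rw [← gaussianReal_eq_withDensity]
    infer_instance
  have h1 : gaussP n θ = Measure.pi fun _ : Fin n =>
      (gaussianReal 0 1).withDensity (gdens θ) := by
    unfold gaussP
    congr 1
    ext1 i
    exact gaussianReal_eq_withDensity θ
  rw [h1]
  exact pi_withDensity (fun _ => gaussianReal 0 1) (fun _ => gdens θ)
    (fun _ => measurable_gdens θ) (hwd := fun _ => by
      rw [← gaussianReal_eq_withDensity]; infer_instance)

lemma measurable_Lprod (θ : ℝ) (n : ℕ) :
    Measurable (fun y : Fin n → ℝ => ∏ i, gdens θ (y i)) :=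
  Finset.measurable_prod _ fun i _ => (measurable_gdens θ).comp (measurable_pi_apply i)

lemma lintegral_sq (θ : ℝ) (n : ℕ) :
    ∫⁻ y, ((∏ i, gdens θ (y i)) * ∏ i, gdens θ (y i)) ∂gaussP n 0
      = ENNReal.ofReal (Real.exp (n * θ ^ 2)) := by
  have hpt : ∀ x : ℝ, gdens θ x * gdens θ x
      = ENNReal.ofReal (Real.exp (θ ^ 2)) * gdens (2 * θ) x := by
    intro x
    unfold gdens
    rw [← ENNReal.ofReal_mul (Real.exp_nonneg _), ← ENNReal.ofReal_mul (Real.exp_nonneg _),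
      ← Real.exp_add, ← Real.exp_add]
    congr 1
    ring
  calc ∫⁻ y, ((∏ i, gdens θ (y i)) * ∏ i, gdens θ (y i)) ∂gaussP n 0
      = ∫⁻ y, ∏ i, (fun x => ENNReal.ofReal (Real.exp (θ ^ 2)) * gdens (2 * θ) x) (y i)
          ∂(Measure.pi fun _ : Fin n => gaussianReal 0 1) := by
        refine lintegral_congr fun y => ?_
        rw [← Finset.prod_mul_distrib]
        exact Finset.prod_congr rfl fun i _ => hpt (y i)
    _ = ∏ _i : Fin n, ∫⁻ x, ENNReal.ofReal (Real.exp (θ ^ 2)) * gdens (2 * θ) x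
          ∂gaussianReal 0 1 :=
        lintegral_pi_prod _ (fun _ => inferInstance) _
          (fun _ => measurable_const.mul (measurable_gdens _))
    _ = ENNReal.ofReal (Real.exp (n * θ ^ 2)) := by
        rw [Finset.prod_const]
        rw [lintegral_const_mul _ (measurable_gdens _), lintegral_gdens, mul_one]
        rw [← ENNReal.ofReal_pow (Real.exp_nonneg _), ← Real.exp_nat_mul]
        simp

lemma key_bound (n : ℕ) (θ : ℝ) (B : Set (Fin n → ℝ)) (hB : MeasurableSet B) :
    gaussP n θ B ≤ (gaussP n 0 B) ^ (1/2 : ℝ) * ENNReal.ofReal (Real.exp (n * θ ^ 2 / 2)) := by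
  have h1 : gaussP n θ B = ∫⁻ y, (B.indicator (fun _ => (1:ℝ≥0∞))
      * fun z : Fin n → ℝ => ∏ i, gdens θ (z i)) y ∂gaussP n 0 := by
    rw [gaussP_eq, withDensity_apply _ hB, ← lintegral_indicator hB]
    refine lintegral_congr fun y => ?_
    by_cases hy : y ∈ B
    · simp [Set.indicator_of_mem hy]
    · simp [Set.indicator_of_notMem hy]
  rw [h1]
  have hconj : Real.HolderConjugate 2 2 := Real.HolderConjugate.two_two
  refine le_trans (ENNReal.lintegral_mul_le_Lp_mul_Lq (gaussP n 0) hconj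
    (Measurable.aemeasurable (measurable_one.indicator hB))
    (measurable_Lprod θ n).aemeasurable) ?_
  have e1 : ∫⁻ y, (B.indicator (fun _ => (1:ℝ≥0∞)) y) ^ (2:ℝ) ∂gaussP n 0 = gaussP n 0 B := by
    rw [← lintegral_indicator_one hB]
    refine lintegral_congr fun y => ?_
    by_cases hy : y ∈ B
    · simp [Set.indicator_of_mem hy]
    · simp [Set.indicator_of_notMem hy, ENNReal.zero_rpow_of_pos]
  have e2 : ∫⁻ y, (∏ i, gdens θ (y i)) ^ (2:ℝ) ∂gaussP n 0
      = ENNReal.ofReal (Real.exp (n * θ ^ 2)) := by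
    rw [← lintegral_sq θ n]
    refine lintegral_congr fun y => ?_
    rw [show (2:ℝ) = ((2:ℕ):ℝ) by norm_num, ENNReal.rpow_natCast, sq]
  rw [e1, e2]
  refine mul_le_mul_right (le_of_eq ?_) _
  rw [ENNReal.ofReal_rpow_of_pos (Real.exp_pos _),
    Real.rpow_def_of_pos (Real.exp_pos _), Real.log_exp]
  congr 2
  ring

theorem stmt_12
    (est : (n : ℕ) → (Fin n → ℝ) → ℝ)
    (hmeas : ∀ n, Measurable (est n))
    (hsparse : Tendsto (fun n => gaussP n 0 {y | est n y = 0}) atTop (𝓝 1)) :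
    Tendsto (fun n : ℕ => ⨆ θ : ℝ,
        ∫⁻ y, ENNReal.ofReal (Real.sqrt n * |est n y - θ|) ∂(gaussP n θ))
      atTop (𝓝 ⊤) := by
  have hAmeas : ∀ n, MeasurableSet {y : Fin n → ℝ | est n y = 0} :=
    fun n => (hmeas n) (measurableSet_singleton 0)
  have hprob : ∀ n θ, IsProbabilityMeasure (gaussP n θ) := by
    intro n θ
    unfold gaussP
    infer_instance
  have heps : Tendsto (fun n => gaussP n 0 {y : Fin n → ℝ | est n y = 0}ᶜ) atTop (𝓝 0) := by
    have h1 : ∀ n, gaussP n 0 {y : Fin n → ℝ | est n y = 0}ᶜ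
        = 1 - gaussP n 0 {y : Fin n → ℝ | est n y = 0} := by
      intro n
      haveI := hprob n 0
      rw [measure_compl (hAmeas n) (measure_ne_top _ _), measure_univ]
    simp_rw [h1]
    have := ENNReal.Tendsto.sub (tendsto_const_nhds (x := (1:ℝ≥0∞)) (f := atTop))
      hsparse (Or.inl ENNReal.one_ne_top)
    simpa using this
  rw [ENNReal.tendsto_nhds_top_iff_nnreal]
  intro x
  set c : ℝ := 2 * ((x:ℝ) + 1) with hcdef
  have hc : 0 < c := by positivity
  have hbnd : Tendsto (fun n => ENNReal.ofReal (Real.exp (c^2/2))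
      * (gaussP n 0 {y : Fin n → ℝ | est n y = 0}ᶜ) ^ (1/2:ℝ)) atTop (𝓝 0) := by
    have h0 : Tendsto (fun n => (gaussP n 0 {y : Fin n → ℝ | est n y = 0}ᶜ) ^ (1/2:ℝ))
        atTop (𝓝 0) := by
      have hcont := (ENNReal.continuous_rpow_const (y := (1/2:ℝ))).tendsto 0
      rw [ENNReal.zero_rpow_of_pos (by norm_num)] at hcont
      exact hcont.comp heps
    have := ENNReal.Tendsto.const_mul (a := ENNReal.ofReal (Real.exp (c^2/2))) h0
      (Or.inr ENNReal.ofReal_ne_top)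
    simpa using this
  have hev : ∀ᶠ n : ℕ in atTop, ENNReal.ofReal (Real.exp (c^2/2))
      * (gaussP n 0 {y : Fin n → ℝ | est n y = 0}ᶜ) ^ (1/2:ℝ) ≤ 2⁻¹ := by
    refine (hbnd.eventually_le_const ?_)
    norm_num
  filter_upwards [hev, eventually_ge_atTop 1] with n hn hn1
  -- setup
  have hnpos : (0:ℝ) < n := by exact_mod_cast hn1
  have hsq : (0:ℝ) < Real.sqrt n := Real.sqrt_pos.mpr hnpos
  set θ : ℝ := c / Real.sqrt n with hθdef
  have hθpos : 0 < θ := div_pos hc hsq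
  have hsθ : Real.sqrt n * θ = c := by
    rw [hθdef, mul_div_cancel₀ _ (ne_of_gt hsq)]
  have hnθ : (n:ℝ) * θ^2 = c^2 := by
    rw [hθdef, div_pow, Real.sq_sqrt hnpos.le, mul_div_cancel₀ _ (ne_of_gt hnpos)]
  haveI := hprob n θ
  -- lower bound the integral at θ
  have step1 : ENNReal.ofReal c * gaussP n θ {y : Fin n → ℝ | est n y = 0}
      ≤ ∫⁻ y, ENNReal.ofReal (Real.sqrt n * |est n y - θ|) ∂(gaussP n θ) := by
    have e : ∫⁻ y in {y : Fin n → ℝ | est n y = 0},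
        ENNReal.ofReal (Real.sqrt n * |est n y - θ|) ∂(gaussP n θ)
        = ENNReal.ofReal c * gaussP n θ {y : Fin n → ℝ | est n y = 0} := by
      rw [← setLIntegral_const]
      refine setLIntegral_congr_fun (hAmeas n) (fun y hy => ?_)
      have hy0 : est n y = 0 := hy
      rw [hy0, zero_sub, abs_neg, abs_of_pos hθpos, hsθ]
    rw [← e]
    exact setLIntegral_le_lintegral _ _
  -- upper bound the complement
  have step2 : gaussP n θ {y : Fin n → ℝ | est n y = 0}ᶜ ≤ 2⁻¹ := by
    refine le_trans (key_bound n θ _ (hAmeas n).compl) ?_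
    rw [show (n:ℝ) * θ^2 / 2 = c^2/2 by rw [hnθ], mul_comm]
    exact hn
  have step3 : (2:ℝ≥0∞)⁻¹ ≤ gaussP n θ {y : Fin n → ℝ | est n y = 0} := by
    have := measure_compl (μ := gaussP n θ) (hAmeas n) (measure_ne_top _ _)
    rw [measure_univ] at this
    have h2 : 1 - gaussP n θ {y : Fin n → ℝ | est n y = 0} ≤ 2⁻¹ := this ▸ step2
    have h3 := tsub_le_tsub_left h2 (1:ℝ≥0∞)
    rw [ENNReal.one_sub_inv_two] at h3
    refine le_trans h3 ?_
    rw [ENNReal.sub_sub_cancel ENNReal.one_ne_top (prob_le_one)]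
  -- combine
  have hfinal : (x:ℝ≥0∞) < ENNReal.ofReal c * 2⁻¹ := by
    have : ENNReal.ofReal c * 2⁻¹ = ENNReal.ofReal ((x:ℝ) + 1) := by
      rw [show ((2:ℝ≥0∞))⁻¹ = ENNReal.ofReal (2⁻¹:ℝ) by
          rw [ENNReal.ofReal_inv_of_pos (by norm_num)]
          norm_num,
        ← ENNReal.ofReal_mul hc.le]
      congr 1
      rw [hcdef]
      ring
    rw [this, ← ENNReal.ofReal_coe_nnreal]
    exact ENNReal.ofReal_lt_ofReal_iff (by positivity) |>.mpr (lt_add_one _)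
  calc (x:ℝ≥0∞) < ENNReal.ofReal c * 2⁻¹ := hfinal
    _ ≤ ENNReal.ofReal c * gaussP n θ {y : Fin n → ℝ | est n y = 0} :=
        mul_le_mul_right step3 _
    _ ≤ ∫⁻ y, ENNReal.ofReal (Real.sqrt n * |est n y - θ|) ∂(gaussP n θ) := step1
    _ ≤ ⨆ θ : ℝ, ∫⁻ y, ENNReal.ofReal (Real.sqrt n * |est n y - θ|) ∂(gaussP n θ) :=
        le_iSup (fun θ => ∫⁻ y, ENNReal.ofReal (Real.sqrt n * |est n y - θ|) ∂(gaussP n θ)) θ
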